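/- Consistency in a complete round-robin tournament: suppose n ≥ 2 and M_{ij} = m > 0 for all i ≠ j (every pair of teams has played exactly m matches), and Σ_i s_i = 0. Then the generalized row sum rating is x(ε) = s / (1 + ε·m·n) for every ε > 0, and the least squares rating is q = s / (m·n). In particular, both methods induce exactly the same ranking as the normalized scores s. -/

import Mathlib

open Matrix Finset

/-- The Laplacian matrix of the matches matrix `M`:
`L i j = -M i j` for `i ≠ j` and `L i i = ∑_{j ≠ i} M i j`. -/
def lap {n : ℕ} (M : Matrix (Fin n) (Fin n) ℝ) : Matrix (Fin n) (Fin n) ℝ :=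
  Matrix.of fun i j => if i = j then ∑ k ∈ Finset.univ.erase i, M i k else -M i j

lemma lap_mulVec_const (n : ℕ) (M : Matrix (Fin n) (Fin n) ℝ) (m : ℝ)
    (hM : ∀ i j : Fin n, i ≠ j → M i j = m) (v : Fin n → ℝ) (i : Fin n) :
    (lap M *ᵥ v) i = m * n * v i - m * ∑ j, v j := by
  have hcard : (Finset.univ.erase i).card = n - 1 := by
    rw [Finset.card_erase_of_mem (Finset.mem_univ i)]; simp
  have hn1 : ((n:ℝ) - 1) = ((n-1 : ℕ) : ℝ) := by
    have : 1 ≤ n := Nat.one_le_iff_ne_zero.mpr (by rintro rfl; exact absurd i.2 (by simp))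
    push_cast [this]; ring
  have hdiagsum : ∑ k ∈ Finset.univ.erase i, M i k = m * ((n:ℝ) - 1) := by
    rw [Finset.sum_congr rfl (fun k hk => hM i k (Ne.symm (Finset.ne_of_mem_erase hk))),
      Finset.sum_const, hcard, hn1, nsmul_eq_mul, mul_comm]
  have key : (lap M *ᵥ v) i
      = ∑ j, (if i = j then ∑ k ∈ Finset.univ.erase i, M i k else -M i j) * v j := by
    simp [lap, Matrix.mulVec, dotProduct]
  have h2 : ∑ j ∈ Finset.univ.erase i,
      (if i = j then m * ((n:ℝ) - 1) else -M i j) * v j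
      = ∑ j ∈ Finset.univ.erase i, -(m * v j) := by
    refine Finset.sum_congr rfl fun j hj => ?_
    have hji : j ≠ i := Finset.ne_of_mem_erase hj
    rw [if_neg (Ne.symm hji), hM i j (Ne.symm hji)]; ring
  rw [key, ← Finset.add_sum_erase _ _ (Finset.mem_univ i), if_pos rfl, hdiagsum, h2,
    Finset.sum_neg_distrib, ← Finset.mul_sum,
    Finset.sum_erase_eq_sub (Finset.mem_univ i)]
  ring

/-- Consistency in a complete round-robin tournament: if every pair of distinct teams has
played exactly `m > 0` matches and `∑ s = 0`, then `x(ε) = s / (1 + ε m n)` for every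
`ε > 0` and the least squares rating is `q = s / (m n)`; in particular, both methods
induce exactly the same ranking as the normalized scores `s`. -/
theorem grs_ls_complete_round_robin
    (n : ℕ) (hn : 2 ≤ n) (M : Matrix (Fin n) (Fin n) ℝ)
    (hsymm : M.IsSymm) (hnonneg : ∀ i j, 0 ≤ M i j) (hdiag : ∀ i, M i i = 0)
    (m : ℝ) (hm : 0 < m) (hM : ∀ i j : Fin n, i ≠ j → M i j = m)
    (s : Fin n → ℝ) (hs : ∑ i, s i = 0)
    (x : ℝ → (Fin n → ℝ))
    (hx : ∀ ε : ℝ, 0 < ε → (1 + ε • lap M) *ᵥ x ε = s)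
    (q : Fin n → ℝ) (hq0 : ∑ i, q i = 0) (hq : lap M *ᵥ q = s) :
    (∀ ε : ℝ, 0 < ε → x ε = (1 + ε * m * n)⁻¹ • s) ∧
    q = (m * n)⁻¹ • s ∧
    (∀ i j : Fin n, ∀ ε : ℝ, 0 < ε →
      ((x ε i > x ε j ↔ s i > s j) ∧ (q i > q j ↔ s i > s j))) := by
  have key := lap_mulVec_const n M m hM
  have hnpos : (0:ℝ) < n := by
    have : (2:ℝ) ≤ n := by exact_mod_cast hn
    linarith
  have hmn : (0:ℝ) < m * n := mul_pos hm hnpos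
  -- least squares part
  have hqi : ∀ i, q i = (m * n)⁻¹ * s i := by
    intro i
    have h := congrFun hq i
    rw [key q i, hq0, mul_zero, sub_zero] at h
    field_simp
    linarith [h]
  have hqeq : q = (m * n)⁻¹ • s := funext fun i => by
    simpa using hqi i
  -- generalized row sum part
  have hxeq : ∀ ε : ℝ, 0 < ε → x ε = (1 + ε * m * n)⁻¹ • s := by
    intro ε hε
    have hc : (0:ℝ) < 1 + ε * m * n := by nlinarith
    have h := hx ε hε
    rw [Matrix.add_mulVec, Matrix.one_mulVec, Matrix.smul_mulVec] at h
    have hxi : ∀ i, x ε i + ε * (m * n * x ε i - m * ∑ j, x ε j) = s i := by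
      intro i
      have := congrFun h i
      simpa [key (x ε) i] using this
    have hX : ∑ j, x ε j = 0 := by
      have hsum : ∑ i, (x ε i + ε * (m * ↑n * x ε i - m * ∑ j, x ε j)) = 0 := by
        rw [Finset.sum_congr rfl fun i _ => hxi i, hs]
      have e : ∑ i, (x ε i + ε * (m * ↑n * x ε i - m * ∑ j, x ε j))
          = (∑ j, x ε j) + ε * (m * ↑n * (∑ j, x ε j) - ↑n * (m * ∑ j, x ε j)) := by
        rw [Finset.sum_add_distrib, ← Finset.mul_sum, Finset.sum_sub_distrib,
          ← Finset.mul_sum, ← Finset.mul_sum, Finset.sum_const, Finset.card_univ,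
          Fintype.card_fin, nsmul_eq_mul]
        ring
      rw [e] at hsum
      have : (∑ j, x ε j) + ε * (m * ↑n * (∑ j, x ε j) - ↑n * (m * ∑ j, x ε j))
          = ∑ j, x ε j := by ring
      linarith [hsum, this]
    funext i
    have h2 := hxi i
    rw [hX, mul_zero, sub_zero] at h2
    show x ε i = (1 + ε * m * ↑n)⁻¹ * s i
    field_simp
    linarith [h2]
  refine ⟨hxeq, hqeq, fun i j ε hε => ?_⟩
  have hc : (0:ℝ) < 1 + ε * m * n := by nlinarith
  constructor
  · rw [hxeq ε hε]
    show (1 + ε * m * ↑n)⁻¹ * s i > (1 + ε * m * ↑n)⁻¹ * s j ↔ _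
    exact mul_lt_mul_iff_right₀ (inv_pos.mpr hc)
  · rw [hqeq]
    show (m * ↑n)⁻¹ * s i > (m * ↑n)⁻¹ * s j ↔ _
    exact mul_lt_mul_iff_right₀ (inv_pos.mpr hmn)
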